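/- The distribution matrix sequence P of the semi-Markov chain satisfies the renewal equation P = S q + q * P, and consequently P = (δI − q)^{(−1)} * S q = ψ * S q. -/

import Mathlib

open MeasureTheory Filter Topology Finset ProbabilityTheory

noncomputable section

namespace SMCPaper

variable {E : Type} [Fintype E] [DecidableEq E] {Ω : Type} [MeasurableSpace Ω]

/-- `q` is a (discrete-time) semi-Markov kernel on the finite state space `E`:
nonnegative entries, `q i j 0 = 0`, and total mass `1` from every state. -/
def IsSemiMarkovKernel (q : E → E → ℕ → ℝ) : Prop :=
  (∀ i j k, 0 ≤ q i j k) ∧ (∀ i j, q i j 0 = 0) ∧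
    ∀ i, HasSum (fun p : E × ℕ => q i p.1 p.2) 1

/-- The sojourn times `X n = S n − S (n−1)` (so `X 0 = 0` when `S 0 = 0`). -/
def Xproc (S : ℕ → Ω → ℕ) (n : ℕ) (ω : Ω) : ℕ := S n ω - S (n - 1) ω

/-- `(J, S)` is a Markov renewal chain with semi-Markov kernel `q` under the family of
probability measures `P i₀` (the chain starting at `i₀`):  `J 0 = i₀`, `S 0 = 0` a.s., and
the process `(J, X)` is a time-homogeneous Markov chain with transitions
`P(J_{n+1} = j, X_{n+1} = k | J_n = i, past) = q i j k`. -/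
def IsMarkovRenewalChain (P : E → Measure Ω) (J : ℕ → Ω → E) (S : ℕ → Ω → ℕ)
    (q : E → E → ℕ → ℝ) : Prop :=
  (∀ i, IsProbabilityMeasure (P i)) ∧
  (∀ n i, MeasurableSet {ω | J n ω = i}) ∧
  (∀ n k, MeasurableSet {ω | S n ω = k}) ∧
  (∀ i₀, P i₀ {ω | J 0 ω = i₀ ∧ S 0 ω = 0} = 1) ∧
  (∀ i₀ (n : ℕ) (js : ℕ → E) (xs : ℕ → ℕ),
    P i₀ ({ω | J (n+1) ω = js (n+1) ∧ Xproc S (n+1) ω = xs (n+1)} ∩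
        {ω | ∀ l ≤ n, J l ω = js l ∧ Xproc S l ω = xs l}) =
      ENNReal.ofReal (q (js n) (js (n+1)) (xs (n+1))) *
        P i₀ {ω | ∀ l ≤ n, J l ω = js l ∧ Xproc S l ω = xs l})

/-- First hitting time (after time `0`) of the state `j` by the embedded chain `J`. -/
def tau (J : ℕ → Ω → E) (j : E) (ω : Ω) : ℕ := sInf {n | 1 ≤ n ∧ J n ω = j}

/-- Mean recurrence time `μ_{ii} = E_i[S_{τ_i}]`. -/
def mrt (P : E → Measure Ω) (J : ℕ → Ω → E) (S : ℕ → Ω → ℕ) (i : E) : ℝ :=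
  ∫ ω, (S (tau J i ω) ω : ℝ) ∂(P i)

/-- Assumption (A): irreducibility of the embedded chain, aperiodicity of the Markov
renewal chain, and positive recurrence. -/
def AssumptionA (P : E → Measure Ω) (J : ℕ → Ω → E) (S : ℕ → Ω → ℕ) : Prop :=
  (∀ i j : E, 0 < P i {ω | ∃ n, 1 ≤ n ∧ J n ω = j}) ∧
  (∀ i : E, ∀ d : ℕ,
      (∀ k, 0 < P i {ω | S (tau J i ω) ω = k} → d ∣ k) → d = 1) ∧
  (∀ i : E, (∀ᵐ ω ∂(P i), ∃ n, 1 ≤ n ∧ J n ω = i) ∧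
      Integrable (fun ω => (S (tau J i ω) ω : ℝ)) (P i))

/-- `N(M)`: the number of jumps of the Markov renewal chain up to time `M`. -/
def Ncnt (S : ℕ → Ω → ℕ) (M : ℕ) (ω : Ω) : ℕ := sSup {n | S n ω ≤ M}

/-- `N_i(M)`: the number of visits of the embedded chain to `i` before time `M`. -/
def Nvis (J : ℕ → Ω → E) (S : ℕ → Ω → ℕ) (i : E) (M : ℕ) (ω : Ω) : ℕ :=
  ∑ n ∈ Finset.Icc 1 (Ncnt S M ω), if J (n-1) ω = i then 1 else 0

/-- The empirical (nonparametric) estimator `q̂(M)` of the semi-Markov kernel. -/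
def qhat (J : ℕ → Ω → E) (S : ℕ → Ω → ℕ) (M : ℕ) (ω : Ω) (i j : E) (k : ℕ) : ℝ :=
  (∑ n ∈ Finset.Icc 1 (Ncnt S M ω),
      if J (n-1) ω = i ∧ J n ω = j ∧ Xproc S n ω = k then (1:ℝ) else 0) /
    (Nvis J S i M ω : ℝ)

/-- The entry of a matrix sequence at `e = (i, j, k)`. -/
def entry (A : E → E → ℕ → ℝ) (e : E × E × ℕ) : ℝ := A e.1 e.2.1 e.2.2

/-- Matrix convolution of matrix sequences. -/
def mconv (A B : E → E → ℕ → ℝ) : E → E → ℕ → ℝ := fun i j k =>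
  ∑ l ∈ Finset.range (k+1), ∑ u, A i u l * B u j (k - l)

/-- Convolution of scalar sequences. -/
def sconv (a b : ℕ → ℝ) : ℕ → ℝ := fun k => ∑ l ∈ Finset.range (k+1), a l * b (k - l)

/-- The identity `δI` for matrix convolution. -/
def deltaI : E → E → ℕ → ℝ := fun i j k => if i = j ∧ k = 0 then 1 else 0

/-- `n`-fold matrix convolution power. -/
def mpow (A : E → E → ℕ → ℝ) : ℕ → E → E → ℕ → ℝ
  | 0 => deltaI
  | n + 1 => mconv A (mpow A n)

/-- The convolution inverse `(δI − A)^{(−1)} = ∑_{n ≥ 0} A^{(n)}`. -/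
def psiOf (A : E → E → ℕ → ℝ) : E → E → ℕ → ℝ := fun i j k => ∑' n, mpow A n i j k

/-- The operator `S`: `(S A)_{ij}(k) = 1{i=j} ∑_{j'} ∑_{k' > k} A_{ij'}(k')`. -/
def Sop (A : E → E → ℕ → ℝ) : E → E → ℕ → ℝ := fun i j k =>
  if i = j then ∑' p : E × ℕ, if k < p.2 then A i p.1 p.2 else 0 else 0

/-- Cumulative sum of a scalar sequence, `(cumul a) k = ∑_{l ≤ k} a l`. -/
def cumul (a : ℕ → ℝ) (k : ℕ) : ℝ := ∑ l ∈ Finset.range (k+1), a l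

/-- `H_j(k) = ∑_{j'} ∑_{k' ≤ k} q_{jj'}(k')`, the sojourn time c.d.f. in state `j`. -/
def Hseq (q : E → E → ℕ → ℝ) (j : E) (k : ℕ) : ℝ :=
  ∑ j', ∑ l ∈ Finset.range (k+1), q j j' l

/-- The matrix sequence `δ^{et}` with entry `1` at `et` and `0` elsewhere. -/
def deltaM (et : E × E × ℕ) : E → E → ℕ → ℝ := fun i j k => if (i, j, k) = et then 1 else 0

/-- The matrix sequence `q^{it}` with `q^{it}_{ij}(k) = 1{i = it} q_{ij}(k)`. -/
def qres (q : E → E → ℕ → ℝ) (it : E) : E → E → ℕ → ℝ :=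
  fun i j k => if i = it then q i j k else 0

/-- The semi-Markov chain `Z_k = J_{N(k)}` associated to `(J, S)`. -/
def Zproc (J : ℕ → Ω → E) (S : ℕ → Ω → ℕ) (k : ℕ) (ω : Ω) : E := J (Ncnt S k ω) ω

/-- The distribution matrix sequence `P_{ij}(k) = P_i(Z_k = j)` of the semi-Markov chain. -/
def Pdist (P : E → Measure Ω) (J : ℕ → Ω → E) (S : ℕ → Ω → ℕ) (i j : E) (k : ℕ) : ℝ :=
  (P i {ω | Zproc J S k ω = j}).toReal

/-- The estimator `P̂(M) = ψ̂(M) * S q̂(M)` of the distribution matrix sequence. -/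
def Phat (J : ℕ → Ω → E) (S : ℕ → Ω → ℕ) (M : ℕ) (ω : Ω) : E → E → ℕ → ℝ :=
  mconv (psiOf (qhat J S M ω)) (Sop (qhat J S M ω))

/-- The reliability vector sequence `R_i(k) = P_i(T_D > k)`, for `i ∈ U`,
where `D = Uᶜ` and `T_D` is the first entrance time of `Z` into `D`. -/
def Rrel (P : E → Measure Ω) (J : ℕ → Ω → E) (S : ℕ → Ω → ℕ) (U : Finset E)
    (i : E) (k : ℕ) : ℝ :=
  (P i {ω | ∀ l ≤ k, Zproc J S l ω ∈ U}).toReal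

/-- Restriction of a matrix sequence to `Ũ = U × U × ℕ` (extended by `0`). -/
def restrictUU (U : Finset E) (A : E → E → ℕ → ℝ) : E → E → ℕ → ℝ :=
  fun i j k => if i ∈ U ∧ j ∈ U then A i j k else 0

/-- Convolution of a matrix sequence with a vector sequence. -/
def mvconv (A : E → E → ℕ → ℝ) (v : E → ℕ → ℝ) : E → ℕ → ℝ := fun i k =>
  ∑ l ∈ Finset.range (k+1), ∑ u, A i u l * v u (k - l)

/-- The diagonal `(A)_U` of a matrix sequence, as a vector sequence. -/
def diagOf (A : E → E → ℕ → ℝ) : E → ℕ → ℝ := fun i k => A i i k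

/-- The estimator `R̂(M) = ψ̂_UU(M) * (S q̂(M))_U` of the reliability vector sequence. -/
def Rhat (J : ℕ → Ω → E) (S : ℕ → Ω → ℕ) (U : Finset E) (M : ℕ) (ω : Ω) : E → ℕ → ℝ :=
  mvconv (psiOf (restrictUU U (qhat J S M ω))) (diagOf (Sop (qhat J S M ω)))

/-- `μG` is the law of a centered Gaussian family indexed by `ι` with covariance `V`:
every finite linear combination of coordinates has a centered normal distribution with the
appropriate variance. -/
def IsCenteredGaussianLaw {ι : Type} (μG : Measure (ι → ℝ)) (V : ι → ι → ℝ) : Prop :=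
  ∀ a : ι →₀ ℝ,
    Measure.map (fun x => ∑ e ∈ a.support, a e * x e) μG =
      gaussianReal 0
        (Real.toNNReal (∑ e ∈ a.support, ∑ e' ∈ a.support, a e * V e e' * a e'))

/-- `(Z_e)_{e ∈ ι}` is a centered Gaussian family with covariance `V` under `P`. -/
def IsCenteredGaussianFamily {ι : Type} (P : Measure Ω) (Z : ι → Ω → ℝ)
    (V : ι → ι → ℝ) : Prop :=
  (∀ e, Measurable (Z e)) ∧
  ∀ a : ι →₀ ℝ,
    Measure.map (fun ω => ∑ e ∈ a.support, a e * Z e ω) P =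
      gaussianReal 0
        (Real.toNNReal (∑ e ∈ a.support, ∑ e' ∈ a.support, a e * V e e' * a e'))

/-- The covariance matrix `V^q` of the CLT for `q̂`, with `μr i = μ_{ii}`. -/
def Vq (q : E → E → ℕ → ℝ) (μr : E → ℝ) : (E × E × ℕ) → (E × E × ℕ) → ℝ := fun e e' =>
  μr e.1 * (if e.1 = e'.1 then 1 else 0) * entry q e *
    ((if e.2.1 = e'.2.1 ∧ e.2.2 = e'.2.2 then 1 else 0) - entry q e')



-- Auxiliary lemmas
section Aux

lemma sum_range_tri (f : ℕ → ℕ → ℝ) (k : ℕ) :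
    ∑ l ∈ Finset.range (k+1), ∑ m ∈ Finset.range (l+1), f m l
      = ∑ m ∈ Finset.range (k+1), ∑ b ∈ Finset.range (k - m + 1), f m (m + b) := by
  have h1 : ∑ l ∈ Finset.range (k+1), ∑ m ∈ Finset.range (l+1), f m l
      = ∑ l ∈ Finset.range (k+1), ∑ m ∈ Finset.range (k+1), if m ≤ l then f m l else 0 := by
    refine Finset.sum_congr rfl fun l hl => ?_
    rw [← Finset.sum_filter]
    refine Finset.sum_congr ?_ fun _ _ => rfl
    ext m
    simp only [Finset.mem_range, Finset.mem_filter]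
    rw [Finset.mem_range] at hl
    omega
  rw [h1, Finset.sum_comm]
  refine Finset.sum_congr rfl fun m hm => ?_
  rw [Finset.mem_range] at hm
  rw [← Finset.sum_filter]
  have h2 : Finset.filter (fun l => m ≤ l) (Finset.range (k+1)) = Finset.Ico m (k+1) := by
    ext l; simp only [Finset.mem_filter, Finset.mem_range, Finset.mem_Ico]; omega
  rw [h2, Finset.sum_Ico_eq_sum_range]
  have h3 : k + 1 - m = k - m + 1 := by omega
  rw [h3]

lemma mconv_assoc (A B C : E → E → ℕ → ℝ) (i j : E) (k : ℕ) :
    mconv (mconv A B) C i j k = mconv A (mconv B C) i j k := by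
  unfold mconv
  have lhs_eq : ∑ l ∈ Finset.range (k+1), ∑ u,
      (∑ m ∈ Finset.range (l+1), ∑ v, A i v m * B v u (l-m)) * C u j (k-l)
      = ∑ l ∈ Finset.range (k+1), ∑ m ∈ Finset.range (l+1),
        (∑ v, ∑ u, A i v m * B v u (l-m) * C u j (k-l)) := by
    refine Finset.sum_congr rfl fun l _ => ?_
    simp only [Finset.sum_mul]
    exact Finset.sum_comm.trans (Finset.sum_congr rfl fun m _ => Finset.sum_comm)
  rw [lhs_eq, sum_range_tri]
  refine Finset.sum_congr rfl fun m hm => ?_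
  rw [Finset.sum_comm]
  refine Finset.sum_congr rfl fun v _ => ?_
  rw [Finset.mul_sum]
  refine Finset.sum_congr rfl fun b _ => ?_
  rw [Finset.mul_sum]
  refine Finset.sum_congr rfl fun u _ => ?_
  have e1 : m + b - m = b := by omega
  have e2 : k - (m + b) = k - m - b := by omega
  rw [e1, e2, mul_assoc]

variable (q : E → E → ℕ → ℝ)

lemma mpow_eq_zero (hq0 : ∀ i j, q i j 0 = 0) :
    ∀ (n : ℕ) (i j : E) (k : ℕ), k < n → mpow q n i j k = 0 := by
  intro n
  induction n with
  | zero => intro i j k h; omega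
  | succ n ih =>
    intro i j k h
    show mconv q (mpow q n) i j k = 0
    unfold mconv
    refine Finset.sum_eq_zero fun l hl => Finset.sum_eq_zero fun u _ => ?_
    rcases Nat.eq_zero_or_pos l with h0 | h0
    · rw [h0, hq0, zero_mul]
    · rw [Finset.mem_range] at hl
      rw [ih u j (k - l) (by omega), mul_zero]

lemma psiOf_trunc (hq0 : ∀ i j, q i j 0 = 0) (i j : E) {k N : ℕ} (h : k ≤ N) :
    psiOf q i j k = ∑ n ∈ Finset.range (N+1), mpow q n i j k := by
  exact tsum_eq_sum fun n hn => mpow_eq_zero q hq0 n i j k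
    (by rw [Finset.mem_range] at hn; omega)

lemma mconv_deltaI (A : E → E → ℕ → ℝ) (i j : E) (k : ℕ) :
    mconv deltaI A i j k = A i j k := by
  unfold mconv deltaI
  rw [Finset.sum_eq_single 0]
  · rw [Finset.sum_eq_single i]
    · simp
    · intro u _ hu; simp [Ne.symm hu]
    · intro h; simp at h
  · intro l _ hl
    refine Finset.sum_eq_zero fun u _ => ?_
    simp [hl]
  · intro h; simp at h

lemma psiOf_rec (hq0 : ∀ i j, q i j 0 = 0) (i j : E) (k : ℕ) :
    psiOf q i j k = deltaI i j k + mconv q (psiOf q) i j k := by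
  rw [psiOf_trunc q hq0 i j (Nat.le_succ k)]
  rw [Finset.sum_range_succ']
  have h1 : ∑ n ∈ Finset.range (k+1), mpow q (n+1) i j k
      = mconv q (psiOf q) i j k := by
    have : ∀ n, mpow q (n+1) = mconv q (mpow q n) := fun n => rfl
    simp only [this]
    unfold mconv
    rw [Finset.sum_comm]
    refine Finset.sum_congr rfl fun l hl => ?_
    rw [Finset.sum_comm]
    refine Finset.sum_congr rfl fun u _ => ?_
    rw [← Finset.mul_sum]
    congr 1
    rw [psiOf_trunc q hq0 u j (by rw [Finset.mem_range] at hl; omega : k - l ≤ k)]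
  rw [h1]
  exact add_comm _ _

lemma mconv_congr_left {A A' : E → E → ℕ → ℝ} (h : ∀ i j k, A i j k = A' i j k)
    (B : E → E → ℕ → ℝ) (i j : E) (k : ℕ) : mconv A B i j k = mconv A' B i j k := by
  unfold mconv
  exact Finset.sum_congr rfl fun l _ => Finset.sum_congr rfl fun u _ => by rw [h]

lemma mconv_congr_right (A : E → E → ℕ → ℝ) {B B' : E → E → ℕ → ℝ}
    (h : ∀ i j k, B i j k = B' i j k) (i j : E) (k : ℕ) :
    mconv A B i j k = mconv A B' i j k := by
  unfold mconv
  exact Finset.sum_congr rfl fun l _ => Finset.sum_congr rfl fun u _ => by rw [h]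

lemma mconv_add_left (A₁ A₂ B : E → E → ℕ → ℝ) (i j : E) (k : ℕ) :
    mconv (fun a b c => A₁ a b c + A₂ a b c) B i j k
      = mconv A₁ B i j k + mconv A₂ B i j k := by
  unfold mconv
  simp only [add_mul, Finset.sum_add_distrib]

lemma FF_rec (hq0 : ∀ i j, q i j 0 = 0) (i j : E) (k : ℕ) :
    mconv (psiOf q) (Sop q) i j k
      = Sop q i j k + mconv q (mconv (psiOf q) (Sop q)) i j k := by
  calc mconv (psiOf q) (Sop q) i j k
      = mconv (fun a b c => deltaI a b c + mconv q (psiOf q) a b c) (Sop q) i j k :=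
        mconv_congr_left (psiOf_rec q hq0) (Sop q) i j k
    _ = mconv deltaI (Sop q) i j k + mconv (mconv q (psiOf q)) (Sop q) i j k :=
        mconv_add_left _ _ _ i j k
    _ = Sop q i j k + mconv q (mconv (psiOf q) (Sop q)) i j k := by
        rw [mconv_deltaI, mconv_assoc]

lemma mconv_nonneg {A B : E → E → ℕ → ℝ} (hA : ∀ i j k, 0 ≤ A i j k)
    (hB : ∀ i j k, 0 ≤ B i j k) (i j : E) (k : ℕ) : 0 ≤ mconv A B i j k :=
  Finset.sum_nonneg fun l _ => Finset.sum_nonneg fun u _ =>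
    mul_nonneg (hA _ _ _) (hB _ _ _)

lemma mpow_nonneg (hq : ∀ i j k, 0 ≤ q i j k) :
    ∀ (n : ℕ) (i j : E) (k : ℕ), 0 ≤ mpow q n i j k := by
  intro n
  induction n with
  | zero => intro i j k; unfold mpow deltaI; positivity
  | succ n ih => exact fun i j k => mconv_nonneg hq ih i j k

lemma psiOf_nonneg (hq : ∀ i j k, 0 ≤ q i j k) (i j : E) (k : ℕ) :
    0 ≤ psiOf q i j k :=
  tsum_nonneg fun n => mpow_nonneg q hq n i j k

lemma Sop_nonneg (hq : ∀ i j k, 0 ≤ q i j k) (i j : E) (k : ℕ) :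
    0 ≤ Sop q i j k := by
  unfold Sop
  split
  · exact tsum_nonneg fun p => by split; exacts [hq _ _ _, le_refl 0]
  · exact le_refl 0

lemma FF_nonneg (hq : ∀ i j k, 0 ≤ q i j k) (i j : E) (k : ℕ) :
    0 ≤ mconv (psiOf q) (Sop q) i j k :=
  mconv_nonneg (psiOf_nonneg q hq) (Sop_nonneg q hq) i j k


def Cyl (J : ℕ → Ω → E) (S : ℕ → Ω → ℕ) (n : ℕ) (js : ℕ → E) (xs : ℕ → ℕ) : Set Ω :=
  {ω | ∀ l ≤ n, J l ω = js l ∧ Xproc S l ω = xs l}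

def Gset (S : ℕ → Ω → ℕ) : Set Ω := {ω | S 0 ω = 0 ∧ ∀ n : ℕ, 1 ≤ Xproc S (n+1) ω}

variable {J : ℕ → Ω → E} {S : ℕ → Ω → ℕ}

lemma Xproc_zero (ω : Ω) : Xproc S 0 ω = 0 := by simp [Xproc]

lemma measurableSet_X (hS : ∀ n k, MeasurableSet {ω | S n ω = k}) (n x : ℕ) :
    MeasurableSet {ω | Xproc S n ω = x} := by
  have h : {ω | Xproc S n ω = x}
      = ⋃ (p : ℕ × ℕ) (_ : p.1 - p.2 = x), ({ω | S n ω = p.1} ∩ {ω | S (n-1) ω = p.2}) := by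
    ext ω
    simp only [Set.mem_iUnion, Set.mem_inter_iff, Set.mem_setOf_eq]
    constructor
    · intro hx; exact ⟨(S n ω, S (n-1) ω), hx, rfl, rfl⟩
    · rintro ⟨p, hp, h1, h2⟩
      show S n ω - S (n-1) ω = x
      rw [h1, h2]; exact hp
  rw [h]
  exact MeasurableSet.iUnion fun p => MeasurableSet.iUnion fun _ =>
    ((hS n p.1).inter (hS (n-1) p.2))

lemma measurableSet_Cyl (hJ : ∀ n i, MeasurableSet {ω | J n ω = i})
    (hS : ∀ n k, MeasurableSet {ω | S n ω = k}) (n : ℕ) (js : ℕ → E) (xs : ℕ → ℕ) :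
    MeasurableSet (Cyl J S n js xs) := by
  have h : Cyl J S n js xs
      = ⋂ (l : ℕ) (_ : l ≤ n), ({ω | J l ω = js l} ∩ {ω | Xproc S l ω = xs l}) := by
    ext ω
    simp only [Cyl, Set.mem_setOf_eq, Set.mem_iInter, Set.mem_inter_iff]
  rw [h]
  exact MeasurableSet.iInter fun l => MeasurableSet.iInter fun _ =>
    (hJ l (js l)).inter (measurableSet_X hS l (xs l))

lemma Cyl_succ (n : ℕ) (js : ℕ → E) (xs : ℕ → ℕ) :
    Cyl J S (n+1) js xs =
      {ω | J (n+1) ω = js (n+1) ∧ Xproc S (n+1) ω = xs (n+1)} ∩ Cyl J S n js xs := by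
  ext ω
  simp only [Cyl, Set.mem_setOf_eq, Set.mem_inter_iff]
  constructor
  · intro h
    exact ⟨h (n+1) le_rfl, fun l hl => h l (hl.trans (Nat.le_succ n))⟩
  · rintro ⟨h1, h2⟩ l hl
    by_cases hl' : l ≤ n
    · exact h2 l hl'
    · have : l = n + 1 := by omega
      rw [this]; exact h1

lemma Cyl_update (n : ℕ) (js : ℕ → E) (xs : ℕ → ℕ) (u : E) (x : ℕ) :
    Cyl J S n (Function.update js (n+1) u) (Function.update xs (n+1) x) = Cyl J S n js xs := by
  ext ω
  simp only [Cyl, Set.mem_setOf_eq]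
  refine forall_congr' fun l => imp_congr_right fun hl => ?_
  rw [Function.update_of_ne (by omega : l ≠ n+1), Function.update_of_ne (by omega : l ≠ n+1)]

lemma Cyl_decomp (n : ℕ) (js : ℕ → E) (xs : ℕ → ℕ) :
    Cyl J S n js xs = ⋃ (p : E × ℕ),
      Cyl J S (n+1) (Function.update js (n+1) p.1) (Function.update xs (n+1) p.2) := by
  ext ω
  simp only [Set.mem_iUnion]
  constructor
  · intro h
    refine ⟨(J (n+1) ω, Xproc S (n+1) ω), ?_⟩
    intro l hl
    by_cases hl' : l ≤ n
    · rw [Function.update_of_ne (by omega : l ≠ n+1), Function.update_of_ne (by omega : l ≠ n+1)]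
      exact h l hl'
    · have hln : l = n + 1 := by omega
      rw [hln]
      rw [Function.update_self, Function.update_self]
      exact ⟨rfl, rfl⟩
  · rintro ⟨p, hp⟩
    rw [← Cyl_update n js xs p.1 p.2]
    intro l hl
    exact hp l (hl.trans (Nat.le_succ n))

lemma Cyl_disjoint (n : ℕ) (js : ℕ → E) (xs : ℕ → ℕ) :
    Pairwise (Function.onFun Disjoint (fun p : E × ℕ =>
      Cyl J S (n+1) (Function.update js (n+1) p.1) (Function.update xs (n+1) p.2))) := by
  intro p p' hpp'
  rw [Function.onFun, Set.disjoint_left]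
  intro ω h1 h2
  have e1 := h1 (n+1) le_rfl
  have e2 := h2 (n+1) le_rfl
  rw [Function.update_self, Function.update_self] at e1 e2
  exact hpp' (Prod.ext (e1.1 ▸ e2.1) (e1.2 ▸ e2.2))

lemma S_eq_on_Cyl {n : ℕ} {js : ℕ → E} {xs : ℕ → ℕ} {ω : Ω}
    (hω : ω ∈ Cyl J S n js xs) (hG : ω ∈ Gset S) :
    ∀ r, r ≤ n → S r ω = ∑ l ∈ Finset.Icc 1 r, xs l := by
  intro r
  induction r with
  | zero => intro _; simpa using hG.1
  | succ r ih =>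
    intro hr
    have hxr : Xproc S (r+1) ω = xs (r+1) := (hω (r+1) hr).2
    have hstep : 1 ≤ Xproc S (r+1) ω := hG.2 r
    have hX : Xproc S (r+1) ω = S (r+1) ω - S r ω := by simp [Xproc]
    have hs : S (r+1) ω = S r ω + xs (r+1) := by omega
    rw [hs, ih (by omega), Finset.sum_Icc_succ_top (by omega : 1 ≤ r + 1)]

lemma S_mono_of_G {ω : Ω} (hG : ω ∈ Gset S) : StrictMono (fun m => S m ω) := by
  apply strictMono_nat_of_lt_succ
  intro m
  have h1 := hG.2 m
  have hX : Xproc S (m+1) ω = S (m+1) ω - S m ω := by simp [Xproc]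
  omega

lemma Ncnt_eq_of {ω : Ω} (hG : ω ∈ Gset S) {n k : ℕ} (h1 : S n ω ≤ k)
    (h2 : k < S (n+1) ω) : Ncnt S k ω = n := by
  have hmono := S_mono_of_G hG
  have hub : ∀ m ∈ {m | S m ω ≤ k}, m ≤ n := by
    intro m hm
    by_contra hc
    push_neg at hc
    have : S (n+1) ω ≤ S m ω := hmono.monotone hc
    simp only [Set.mem_setOf_eq] at hm
    omega
  exact le_antisymm (csSup_le ⟨n, h1⟩ hub) (le_csSup ⟨n, hub⟩ h1)

lemma sSup_nat_eq_iff {T : Set ℕ} {n : ℕ} (hn : 0 < n) :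
    sSup T = n ↔ n ∈ T ∧ ∀ m, n < m → m ∉ T := by
  constructor
  · intro h
    have hne : T.Nonempty := by
      by_contra h'
      rw [Set.not_nonempty_iff_eq_empty] at h'
      rw [h', csSup_empty] at h
      simp at h; omega
    have hbdd : BddAbove T := by
      by_contra h'
      rw [csSup_of_not_bddAbove h', csSup_empty] at h
      simp at h; omega
    refine ⟨h ▸ Nat.sSup_mem hne hbdd, fun m hm hmem => ?_⟩
    have := le_csSup hbdd hmem
    omega
  · rintro ⟨h1, h2⟩
    have hub : ∀ m ∈ T, m ≤ n := by
      intro m hm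
      by_contra hc
      push_neg at hc
      exact h2 m hc hm
    exact le_antisymm (csSup_le ⟨n, h1⟩ hub) (le_csSup ⟨n, hub⟩ h1)

lemma measurableSet_Ncnt (hS : ∀ n k, MeasurableSet {ω | S n ω = k}) (k : ℕ) :
    ∀ n, MeasurableSet {ω | Ncnt S k ω = n} := by
  have hM : ∀ m, MeasurableSet {ω | S m ω ≤ k} := by
    intro m
    have : {ω | S m ω ≤ k} = ⋃ (c : Fin (k+1)), {ω | S m ω = c} := by
      ext ω
      simp only [Set.mem_iUnion, Set.mem_setOf_eq]
      constructor
      · intro h; exact ⟨⟨S m ω, by omega⟩, rfl⟩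
      · rintro ⟨c, hc⟩; rw [hc]; omega
    rw [this]
    exact MeasurableSet.iUnion fun c => hS m c
  have hpos : ∀ n, 0 < n → MeasurableSet {ω | Ncnt S k ω = n} := by
    intro n hn
    have : {ω | Ncnt S k ω = n}
        = {ω | S n ω ≤ k} ∩ ⋂ (m : ℕ) (_ : n < m), {ω | S m ω ≤ k}ᶜ := by
      ext ω
      simp only [Set.mem_inter_iff, Set.mem_iInter, Set.mem_setOf_eq, Set.mem_compl_iff,
        Ncnt]
      rw [sSup_nat_eq_iff hn]
      simp only [Set.mem_setOf_eq]
    rw [this]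
    exact (hM n).inter (MeasurableSet.iInter fun m => MeasurableSet.iInter fun _ =>
      (hM m).compl)
  intro n
  rcases Nat.eq_zero_or_pos n with h0 | h0
  · rw [h0]
    have : {ω | Ncnt S k ω = 0} = (⋃ (m : ℕ) (_ : 0 < m), {ω | Ncnt S k ω = m})ᶜ := by
      ext ω
      simp only [Set.mem_compl_iff, Set.mem_iUnion, Set.mem_setOf_eq, not_exists]
      constructor
      · intro h m hm; intro hc; omega
      · intro h
        by_contra hc
        exact h (Ncnt S k ω) (by omega) rfl
    rw [this]
    exact (MeasurableSet.iUnion fun m => MeasurableSet.iUnion fun _ => hpos m ‹_›).compl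
  · exact hpos n h0

lemma measurableSet_Z (hJ : ∀ n i, MeasurableSet {ω | J n ω = i})
    (hS : ∀ n k, MeasurableSet {ω | S n ω = k}) (k : ℕ) (j : E) :
    MeasurableSet {ω | Zproc J S k ω = j} := by
  have h : {ω | Zproc J S k ω = j}
      = ⋃ n, ({ω | Ncnt S k ω = n} ∩ {ω | J n ω = j}) := by
    ext ω
    simp only [Set.mem_iUnion, Set.mem_inter_iff, Set.mem_setOf_eq]
    constructor
    · intro hz; exact ⟨Ncnt S k ω, rfl, hz⟩
    · rintro ⟨n, h1, h2⟩
      show J (Ncnt S k ω) ω = j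
      rw [h1]; exact h2
  rw [h]
  exact MeasurableSet.iUnion fun n => (measurableSet_Ncnt hS k n).inter (hJ n j)



variable {q : E → E → ℕ → ℝ} {P : E → Measure Ω}

lemma Cyl_succ_measure (hchain : IsMarkovRenewalChain P J S q) (i₀ : E) (n : ℕ)
    (js : ℕ → E) (xs : ℕ → ℕ) :
    P i₀ (Cyl J S (n+1) js xs)
      = ENNReal.ofReal (q (js n) (js (n+1)) (xs (n+1))) * P i₀ (Cyl J S n js xs) := by
  rw [Cyl_succ]
  exact hchain.2.2.2.2 i₀ n js xs

lemma Cyl_ext_measure (hchain : IsMarkovRenewalChain P J S q) (i₀ : E) (n : ℕ)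
    (js : ℕ → E) (xs : ℕ → ℕ) (u : E) (x : ℕ) :
    P i₀ (Cyl J S (n+1) (Function.update js (n+1) u) (Function.update xs (n+1) x))
      = ENNReal.ofReal (q (js n) u x) * P i₀ (Cyl J S n js xs) := by
  rw [Cyl_succ_measure hchain i₀ n _ _, Cyl_update]
  rw [Function.update_of_ne (by omega : n ≠ n+1), Function.update_self, Function.update_self]

lemma X_null (hq0 : ∀ i j, q i j 0 = 0) (hchain : IsMarkovRenewalChain P J S q)
    (i₀ : E) (n : ℕ) : P i₀ {ω | Xproc S (n+1) ω = 0} = 0 := by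
  classical
  have cover : {ω | Xproc S (n+1) ω = 0} ⊆
      ⋃ (fg : (Fin (n+1) → E) × (Fin (n+1) → ℕ)) (u : E),
        Cyl J S (n+1)
          (Function.update
            (fun l => if h : l < n+1 then fg.1 ⟨l, h⟩ else fg.1 ⟨0, Nat.succ_pos n⟩) (n+1) u)
          (Function.update (fun l => if h : l < n+1 then fg.2 ⟨l, h⟩ else 0) (n+1) 0) := by
    intro ω hω
    simp only [Set.mem_iUnion]
    refine ⟨(fun l => J l.1 ω, fun l => Xproc S l.1 ω), J (n+1) ω, ?_⟩
    intro l hl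
    by_cases hl' : l ≤ n
    · rw [Function.update_of_ne (by omega : l ≠ n+1),
        Function.update_of_ne (by omega : l ≠ n+1), dif_pos (by omega : l < n+1),
        dif_pos (by omega : l < n+1)]
      exact ⟨rfl, rfl⟩
    · have hle : l = n+1 := by omega
      subst hle
      rw [Function.update_self, Function.update_self]
      exact ⟨rfl, hω⟩
  refine measure_mono_null cover
    (measure_iUnion_null fun fg => measure_iUnion_null fun u => ?_)
  rw [Cyl_ext_measure hchain i₀ n _ _ u 0, hq0, ENNReal.ofReal_zero, zero_mul]

lemma G_null (hq0 : ∀ i j, q i j 0 = 0) (hchain : IsMarkovRenewalChain P J S q)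
    (i₀ : E) : P i₀ (Gset S)ᶜ = 0 := by
  have h1 : P i₀ {ω | ¬ S 0 ω = 0} = 0 := by
    have hm : MeasurableSet {ω | J 0 ω = i₀ ∧ S 0 ω = 0} := by
      have he : {ω | J 0 ω = i₀ ∧ S 0 ω = 0} = {ω | J 0 ω = i₀} ∩ {ω | S 0 ω = 0} := rfl
      rw [he]; exact (hchain.2.1 0 i₀).inter (hchain.2.2.1 0 0)
    have hc : P i₀ {ω | J 0 ω = i₀ ∧ S 0 ω = 0}ᶜ = 0 := by
      have := hchain.1 i₀
      rw [measure_compl hm (measure_ne_top _ _), hchain.2.2.2.1 i₀]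
      simp
    refine measure_mono_null ?_ hc
    intro ω hω hmem
    exact hω hmem.2
  have hcover : (Gset S)ᶜ ⊆ {ω | ¬ S 0 ω = 0} ∪ ⋃ (m : ℕ), {ω | Xproc S (m+1) ω = 0} := by
    intro ω hω
    simp only [Gset, Set.mem_compl_iff, Set.mem_setOf_eq, not_and_or, not_forall] at hω
    rcases hω with h | h
    · exact Or.inl h
    · obtain ⟨m, hm⟩ := h
      exact Or.inr (Set.mem_iUnion.2 ⟨m, show Xproc S (m+1) ω = 0 by omega⟩)
  exact measure_mono_null hcover
    (measure_union_null h1 (measure_iUnion_null fun m => X_null hq0 hchain i₀ m))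

lemma key (hq : IsSemiMarkovKernel q) (hchain : IsMarkovRenewalChain P J S q) :
    ∀ (m : ℕ) (i₀ : E) (n : ℕ) (js : ℕ → E) (xs : ℕ → ℕ) (k : ℕ) (j : E),
      (∑ l ∈ Finset.Icc 1 n, xs l) + m = k →
      P i₀ (Cyl J S n js xs ∩ {ω | Zproc J S k ω = j})
        = ENNReal.ofReal (mconv (psiOf q) (Sop q) (js n) j m) * P i₀ (Cyl J S n js xs) := by
  classical
  obtain ⟨hq0, hqz, hqsum⟩ := hq
  intro m
  induction m using Nat.strong_induction_on with
  | _ m IH =>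
    intro i₀ n js xs k j hsum
    have hZm : MeasurableSet {ω | Zproc J S k ω = j} :=
      measurableSet_Z hchain.2.1 hchain.2.2.1 k j
    have hGn : P i₀ (Gset S)ᶜ = 0 := G_null hqz hchain i₀
    set FF := mconv (psiOf q) (Sop q) with hFF
    set cfun : E × ℕ → ℝ := fun p =>
      if p.2 = 0 then 0
      else if p.2 ≤ m then q (js n) p.1 p.2 * FF p.1 j (m - p.2)
      else if js n = j then q (js n) p.1 p.2 else 0 with hcfun
    -- the value of Z on extended cylinders with long last sojourn
    have hZval : ∀ (u : E) (l : ℕ), m < l → ∀ ω,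
        ω ∈ Cyl J S (n+1) (Function.update js (n+1) u) (Function.update xs (n+1) l) →
        ω ∈ Gset S → Zproc J S k ω = js n := by
      intro u l hl ω hω hG
      have hSn : S n ω = ∑ l' ∈ Finset.Icc 1 n, xs l' := by
        rw [S_eq_on_Cyl hω hG n (Nat.le_succ n)]
        refine Finset.sum_congr rfl fun l' hl' => ?_
        rw [Finset.mem_Icc] at hl'
        rw [Function.update_of_ne (by omega : l' ≠ n+1)]
      have hSn1 : S (n+1) ω = (∑ l' ∈ Finset.Icc 1 n, xs l') + l := by
        rw [S_eq_on_Cyl hω hG (n+1) le_rfl,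
          Finset.sum_Icc_succ_top (by omega : 1 ≤ n+1), Function.update_self]
        congr 1
        refine Finset.sum_congr rfl fun l' hl' => ?_
        rw [Finset.mem_Icc] at hl'
        rw [Function.update_of_ne (by omega : l' ≠ n+1)]
      have hN : Ncnt S k ω = n :=
        Ncnt_eq_of hG (by omega) (by omega)
      have hJn : J n ω = js n := by
        have := (hω n (Nat.le_succ n)).1
        rwa [Function.update_of_ne (by omega : n ≠ n+1)] at this
      show J (Ncnt S k ω) ω = js n
      rw [hN]; exact hJn
    have hterm : ∀ p : E × ℕ,
        P i₀ (Cyl J S (n+1) (Function.update js (n+1) p.1) (Function.update xs (n+1) p.2)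
            ∩ {ω | Zproc J S k ω = j})
          = ENNReal.ofReal (cfun p) * P i₀ (Cyl J S n js xs) := by
      rintro ⟨u, l⟩
      rcases Nat.eq_zero_or_pos l with hl0 | hlpos
      · subst hl0
        have h0 : P i₀ (Cyl J S (n+1) (Function.update js (n+1) u)
            (Function.update xs (n+1) 0)) = 0 := by
          rw [Cyl_ext_measure hchain i₀ n js xs u 0, hqz, ENNReal.ofReal_zero, zero_mul]
        rw [measure_mono_null Set.inter_subset_left h0]
        simp [hcfun]
      · by_cases hlm : l ≤ m
        · have hsum' : (∑ l' ∈ Finset.Icc 1 (n+1), (Function.update xs (n+1) l) l')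
              + (m - l) = k := by
            rw [Finset.sum_Icc_succ_top (by omega : 1 ≤ n+1), Function.update_self]
            have he : ∑ l' ∈ Finset.Icc 1 n, (Function.update xs (n+1) l) l'
                = ∑ l' ∈ Finset.Icc 1 n, xs l' := by
              refine Finset.sum_congr rfl fun l' hl' => ?_
              rw [Finset.mem_Icc] at hl'
              rw [Function.update_of_ne (by omega : l' ≠ n+1)]
            rw [he]
            omega
          have hIH := IH (m - l) (by omega) i₀ (n+1) (Function.update js (n+1) u)
            (Function.update xs (n+1) l) k j hsum'
          rw [Function.update_self] at hIH
          rw [hIH, Cyl_ext_measure hchain i₀ n js xs u l]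
          have hcv : cfun (u, l) = q (js n) u l * FF u j (m - l) := by
            simp only [hcfun]
            rw [if_neg (by omega), if_pos hlm]
          rw [hcv, ENNReal.ofReal_mul (hq0 (js n) u l), ← mul_assoc,
            mul_comm (ENNReal.ofReal (FF u j (m - l))) (ENNReal.ofReal (q (js n) u l)),
            mul_assoc]
        · -- l > m : tail case
          have hcv : cfun (u, l) = if js n = j then q (js n) u l else 0 := by
            simp only [hcfun]
            rw [if_neg (by omega), if_neg (by omega)]
          rw [hcv]
          rw [← measure_inter_conull (s := Cyl J S (n+1) (Function.update js (n+1) u)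
            (Function.update xs (n+1) l) ∩ {ω | Zproc J S k ω = j}) hGn]
          by_cases hj : js n = j
          · have hset : Cyl J S (n+1) (Function.update js (n+1) u)
                (Function.update xs (n+1) l) ∩ {ω | Zproc J S k ω = j} ∩ Gset S
                = Cyl J S (n+1) (Function.update js (n+1) u)
                  (Function.update xs (n+1) l) ∩ Gset S := by
              ext ω
              constructor
              · rintro ⟨⟨h1, _⟩, h3⟩
                exact ⟨h1, h3⟩
              · rintro ⟨h1, h3⟩
                refine ⟨⟨h1, ?_⟩, h3⟩
                show Zproc J S k ω = j
                rw [hZval u l (by omega) ω h1 h3, hj]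
            rw [hset, measure_inter_conull hGn, Cyl_ext_measure hchain i₀ n js xs u l,
              if_pos hj]
          · have hset : Cyl J S (n+1) (Function.update js (n+1) u)
                (Function.update xs (n+1) l) ∩ {ω | Zproc J S k ω = j} ∩ Gset S = ∅ := by
              ext ω
              simp only [Set.mem_empty_iff_false, iff_false]
              rintro ⟨⟨h1, h2⟩, h3⟩
              have := hZval u l (by omega) ω h1 h3
              have hzj : Zproc J S k ω = j := h2
              exact hj (by rw [← this, hzj])
            rw [hset, if_neg hj, ENNReal.ofReal_zero, zero_mul, measure_empty]
    -- decompose the cylinder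
    have hdec : Cyl J S n js xs ∩ {ω | Zproc J S k ω = j}
        = ⋃ (p : E × ℕ),
          (Cyl J S (n+1) (Function.update js (n+1) p.1) (Function.update xs (n+1) p.2)
            ∩ {ω | Zproc J S k ω = j}) := by
      conv_lhs => rw [Cyl_decomp n js xs]
      rw [Set.iUnion_inter]
    have hmeas : ∀ p : E × ℕ,
        MeasurableSet (Cyl J S (n+1) (Function.update js (n+1) p.1)
          (Function.update xs (n+1) p.2) ∩ {ω | Zproc J S k ω = j}) := fun p =>
      (measurableSet_Cyl hchain.2.1 hchain.2.2.1 (n+1) _ _).inter hZm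
    have hdisj : Pairwise (Function.onFun Disjoint (fun p : E × ℕ =>
        Cyl J S (n+1) (Function.update js (n+1) p.1) (Function.update xs (n+1) p.2)
          ∩ {ω | Zproc J S k ω = j})) := by
      intro p p' hpp'
      exact Disjoint.mono Set.inter_subset_left Set.inter_subset_left
        (Cyl_disjoint n js xs hpp')
    rw [hdec, measure_iUnion hdisj hmeas]
    -- sum the series
    have hstep : ∑' p : E × ℕ,
        P i₀ (Cyl J S (n+1) (Function.update js (n+1) p.1)
          (Function.update xs (n+1) p.2) ∩ {ω | Zproc J S k ω = j})
        = (∑' p : E × ℕ, ENNReal.ofReal (cfun p)) * P i₀ (Cyl J S n js xs) := by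
      rw [← ENNReal.tsum_mul_right]
      exact tsum_congr hterm
    rw [hstep]
    congr 1
    -- evaluate the constant series
    set c1 : E × ℕ → ℝ := fun p =>
      if 1 ≤ p.2 ∧ p.2 ≤ m then q (js n) p.1 p.2 * FF p.1 j (m - p.2) else 0 with hc1
    set c2 : E × ℕ → ℝ := fun p =>
      if m < p.2 then (if js n = j then q (js n) p.1 p.2 else 0) else 0 with hc2
    have hsplit : ∀ p : E × ℕ,
        ENNReal.ofReal (cfun p) = ENNReal.ofReal (c1 p) + ENNReal.ofReal (c2 p) := by
      rintro ⟨u, l⟩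
      simp only [hcfun, hc1, hc2]
      rcases Nat.eq_zero_or_pos l with h0 | hpos
      · subst h0
        simp
      · by_cases hlm : l ≤ m
        · rw [if_neg (by omega), if_pos hlm, if_pos (by omega : 1 ≤ l ∧ l ≤ m),
            if_neg (by omega), ENNReal.ofReal_zero, add_zero]
        · rw [if_neg (by omega), if_neg hlm, if_neg (by omega : ¬(1 ≤ l ∧ l ≤ m)),
            if_pos (by omega : m < l), ENNReal.ofReal_zero, zero_add]
    have hT1 : ∑' p : E × ℕ, ENNReal.ofReal (c1 p)
        = ENNReal.ofReal (mconv q FF (js n) j m) := by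
      rw [tsum_eq_sum (s := Finset.univ ×ˢ Finset.range (m+1))
        (fun p hp => ?_)]
      · rw [← ENNReal.ofReal_sum_of_nonneg (fun p _ => ?_)]
        · congr 1
          rw [Finset.sum_product]
          rw [Finset.sum_comm]
          show ∑ l ∈ Finset.range (m+1), ∑ u : E, c1 (u, l) = mconv q FF (js n) j m
          unfold mconv
          refine Finset.sum_congr rfl fun l hl => Finset.sum_congr rfl fun u _ => ?_
          rw [Finset.mem_range] at hl
          simp only [hc1]
          rcases Nat.eq_zero_or_pos l with h0 | hpos
          · subst h0
            rw [if_neg (by omega), hqz, zero_mul]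
          · rw [if_pos (by omega : 1 ≤ l ∧ l ≤ m)]
        · rcases p with ⟨u, l⟩
          by_cases h : 1 ≤ l ∧ l ≤ m
          · simp only [hc1, if_pos h]
            exact mul_nonneg (hq0 _ _ _) (FF_nonneg q hq0 _ _ _)
          · simp [hc1, if_neg h]
      · simp only [hc1]
        rw [if_neg]
        · exact ENNReal.ofReal_zero
        · rintro ⟨h1, h2⟩
          apply hp
          rw [Finset.mem_product, Finset.mem_range]
          exact ⟨Finset.mem_univ _, by omega⟩
    have hT2 : ∑' p : E × ℕ, ENNReal.ofReal (c2 p)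
        = ENNReal.ofReal (Sop q (js n) j m) := by
      by_cases hj : js n = j
      · have hnn : ∀ p : E × ℕ, 0 ≤ c2 p := by
          rintro ⟨u, l⟩
          by_cases h1 : m < l <;> simp [hc2, h1, hj, hq0]
        have hsummable : Summable c2 := by
          refine Summable.of_nonneg_of_le hnn (fun p => ?_) (hqsum (js n)).summable
          rcases p with ⟨u, l⟩
          by_cases h1 : m < l <;> simp [hc2, h1, hj, hq0]
        rw [← ENNReal.ofReal_tsum_of_nonneg hnn hsummable]
        congr 1
        unfold Sop
        rw [if_pos hj]
        refine tsum_congr fun p => ?_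
        simp only [hc2, if_pos hj]
      · have hz : ∀ p : E × ℕ, ENNReal.ofReal (c2 p) = 0 := by
          rintro ⟨u, l⟩
          simp only [hc2, if_neg hj]
          split <;> simp
        rw [tsum_congr hz, tsum_zero]
        unfold Sop
        rw [if_neg hj, ENNReal.ofReal_zero]
    calc ∑' p : E × ℕ, ENNReal.ofReal (cfun p)
        = ∑' p : E × ℕ, (ENNReal.ofReal (c1 p) + ENNReal.ofReal (c2 p)) :=
          tsum_congr hsplit
      _ = ∑' p : E × ℕ, ENNReal.ofReal (c1 p) + ∑' p : E × ℕ, ENNReal.ofReal (c2 p) :=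
          ENNReal.tsum_add
      _ = ENNReal.ofReal (mconv q FF (js n) j m) + ENNReal.ofReal (Sop q (js n) j m) := by
          rw [hT1, hT2]
      _ = ENNReal.ofReal (Sop q (js n) j m + mconv q FF (js n) j m) := by
          rw [← ENNReal.ofReal_add (mconv_nonneg hq0 (FF_nonneg q hq0) _ _ _)
            (Sop_nonneg q hq0 _ _ _), add_comm]
      _ = ENNReal.ofReal (FF (js n) j m) := by
          rw [hFF, ← FF_rec q hqz (js n) j m]

end Aux

/-- The distribution matrix sequence of the semi-Markov chain satisfies the renewal
equation `P = S q + q * P`, and consequently `P = ψ * S q`. -/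
theorem statement6 (q : E → E → ℕ → ℝ) (P : E → Measure Ω) (J : ℕ → Ω → E)
    (S : ℕ → Ω → ℕ) (hq : IsSemiMarkovKernel q)
    (hchain : IsMarkovRenewalChain P J S q) :
    (∀ (i j : E) (k : ℕ),
        Pdist P J S i j k = Sop q i j k + mconv q (Pdist P J S) i j k) ∧
    ∀ (i j : E) (k : ℕ),
      Pdist P J S i j k = mconv (psiOf q) (Sop q) i j k    := by
  have hq0 := hq.1
  have hqz := hq.2.1
  have hpart2 : ∀ (i j : E) (k : ℕ),
      Pdist P J S i j k = mconv (psiOf q) (Sop q) i j k := by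
    intro i j k
    have hkey := key hq hchain k i 0 (fun _ => i) (fun _ => 0) k j (by simp)
    have hCyl1 : P i (Cyl J S 0 (fun _ => i) (fun _ => 0)) = 1 := by
      have hsub : {ω | J 0 ω = i ∧ S 0 ω = 0} ⊆ Cyl J S 0 (fun _ => i) (fun _ => 0) := by
        intro ω hω l hl
        have hl0 : l = 0 := by omega
        subst hl0
        exact ⟨hω.1, Xproc_zero ω⟩
      have := hchain.1 i
      refine le_antisymm prob_le_one ?_
      calc (1 : ENNReal) = P i {ω | J 0 ω = i ∧ S 0 ω = 0} := (hchain.2.2.2.1 i).symm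
        _ ≤ _ := measure_mono hsub
    have hCylc : P i (Cyl J S 0 (fun _ => i) (fun _ => 0))ᶜ = 0 := by
      have := hchain.1 i
      rw [measure_compl (measurableSet_Cyl hchain.2.1 hchain.2.2.1 0 _ _)
        (measure_ne_top _ _), hCyl1]
      simp
    have hZ : P i {ω | Zproc J S k ω = j}
        = ENNReal.ofReal (mconv (psiOf q) (Sop q) i j k) := by
      rw [← measure_inter_conull (s := {ω | Zproc J S k ω = j}) hCylc, Set.inter_comm,
        hkey, hCyl1, mul_one]
    unfold Pdist
    rw [hZ, ENNReal.toReal_ofReal (FF_nonneg q hq0 i j k)]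
  refine ⟨?_, hpart2⟩
  intro i j k
  rw [hpart2 i j k, FF_rec q hqz i j k]
  congr 1
  exact mconv_congr_right q (fun a b c => (hpart2 a b c).symm) i j k


end SMCPaper
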